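/- Let μ = ⨂_{k=1}^∞ μ_k be a product probability measure on ℝ^∞ and f a μ-integrable measurable linear functional such that the sequence c_n = ∫ f(0,...,0,y) d(⨂_{k>n} μ_k)(y) tends to 0 as n → ∞. Then the finite-dimensional linear functionals g_n(x) = f(x_1,...,x_{m̃_n},0,0,...) converge to f μ-almost everywhere; hence f is a μ-a.e. limit of continuous linear functionals. -/

import Mathlib

open MeasureTheory Set Filter Topology Pointwise ENNReal

/-- `μ` is the countable product of the probability measures `μs k`:
it assigns the product value to every finite-dimensional cylinder. -/
def IsProductMeasure {E : ℕ → Type*} [∀ k, MeasurableSpace (E k)]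
    (μs : ∀ k, Measure (E k)) (μ : Measure (∀ k, E k)) : Prop :=
  ∀ (n : ℕ) (s : ∀ k, Set (E k)), (∀ k, MeasurableSet (s k)) →
    μ {x | ∀ k < n, x k ∈ s k} = ∏ k ∈ Finset.range n, μs k (s k)

/-- The σ-algebra generated by the first `n` coordinate blocks of `∏_k ℝ^{m_k}`. -/
def coordSA (m : ℕ → ℕ) (n : ℕ) : MeasurableSpace (∀ k, Fin (m k) → ℝ) :=
  MeasurableSpace.comap (fun x (i : Fin n) => x i) inferInstance

section Aux

variable (m : ℕ → ℕ)

/-- Projection on the first `n` coordinate blocks. -/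
def projV (n : ℕ) : (∀ k, Fin (m k) → ℝ) → (∀ i : Fin n, Fin (m (i : ℕ)) → ℝ) :=
  fun x i => x i

lemma measurable_projV (n : ℕ) : Measurable (projV m n) :=
  measurable_pi_lambda _ fun i => measurable_pi_apply _

lemma coordSA_eq (n : ℕ) :
    coordSA m n = MeasurableSpace.comap (projV m n) inferInstance := rfl

lemma coordSA_le (n : ℕ) :
    coordSA m n ≤ (inferInstance : MeasurableSpace (∀ k, Fin (m k) → ℝ)) := by
  rw [coordSA_eq]
  exact measurable_iff_comap_le.mp (measurable_projV m n)

lemma coordSA_mono : Monotone (coordSA m) := by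
  intro a b hab
  have hV : projV m a = (fun v (i : Fin a) => v (Fin.castLE hab i)) ∘ projV m b := rfl
  rw [coordSA_eq, coordSA_eq, hV, ← MeasurableSpace.comap_comp]
  exact MeasurableSpace.comap_mono (measurable_iff_comap_le.mp
    (measurable_pi_lambda _ fun i => measurable_pi_apply _))

lemma pi_sa_def :
    (inferInstance : MeasurableSpace (∀ k, Fin (m k) → ℝ)) =
      ⨆ k, MeasurableSpace.comap (fun x => x k) inferInstance := rfl

lemma iSup_coordSA :
    (⨆ n, coordSA m n) = (inferInstance : MeasurableSpace (∀ k, Fin (m k) → ℝ)) := by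
  refine le_antisymm (iSup_le fun n => coordSA_le m n) ?_
  rw [pi_sa_def]
  refine iSup_le fun k => le_iSup_of_le (k + 1) ?_
  have hV : (fun x : ∀ k, Fin (m k) → ℝ => x k) =
      (fun v : ∀ i : Fin (k + 1), Fin (m (i : ℕ)) → ℝ => v ⟨k, k.lt_succ_self⟩)
        ∘ projV m (k + 1) := rfl
  rw [hV, ← MeasurableSpace.comap_comp, coordSA_eq]
  exact MeasurableSpace.comap_mono (measurable_iff_comap_le.mp (measurable_pi_apply _))

/-- Combination map: first `n` blocks from the first argument, the rest from the second. -/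
def combineF (n : ℕ) : ((∀ k, Fin (m k) → ℝ) × (∀ k, Fin (m k) → ℝ)) → ∀ k, Fin (m k) → ℝ :=
  fun pq k => if k < n then pq.1 k else pq.2 k

lemma measurable_combineF (n : ℕ) : Measurable (combineF m n) := by
  refine measurable_pi_lambda _ fun k => ?_
  by_cases h : k < n
  · simp only [combineF, if_pos h]
    exact (measurable_pi_apply k).comp measurable_fst
  · simp only [combineF, if_neg h]
    exact (measurable_pi_apply k).comp measurable_snd

variable {μs : ∀ k, Measure (Fin (m k) → ℝ)} {μ : Measure (∀ k, Fin (m k) → ℝ)}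

lemma map_projV_eq (hprob : ∀ k, IsProbabilityMeasure (μs k))
    (hμ : IsProductMeasure μs μ) (N : ℕ) :
    μ.map (projV m N) = Measure.pi (fun i : Fin N => μs i) := by
  haveI := hprob
  refine (Measure.pi_eq ?_).symm
  intro s hs
  rw [Measure.map_apply (measurable_projV m N) (MeasurableSet.univ_pi hs)]
  classical
  set S : ∀ k, Set (Fin (m k) → ℝ) := fun k => if h : k < N then s ⟨k, h⟩ else univ with hS
  have hset : projV m N ⁻¹' (univ.pi s) = {x | ∀ k < N, x k ∈ S k} := by
    ext x
    simp only [mem_preimage, mem_univ_pi, mem_setOf_eq, projV, hS]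
    constructor
    · intro hx k hk
      simpa only [dif_pos hk] using hx ⟨k, hk⟩
    · intro hx i
      have := hx i i.isLt
      simpa only [dif_pos i.isLt, Fin.eta] using this
  rw [hset, hμ N S (fun k => by
    rw [hS]; dsimp only
    by_cases hk : k < N
    · rw [dif_pos hk]; exact hs _
    · rw [dif_neg hk]; exact MeasurableSet.univ)]
  rw [← Fin.prod_univ_eq_prod_range (fun k => μs k (S k)) N]
  exact Finset.prod_congr rfl fun i _ => by simp [hS, i.isLt]

lemma map_projV_combineF_eq (hprob : ∀ k, IsProbabilityMeasure (μs k))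
    (hμ : IsProductMeasure μs μ) [IsProbabilityMeasure μ] (n N : ℕ) :
    (μ.prod μ).map (projV m N ∘ combineF m n) = Measure.pi (fun i : Fin N => μs i) := by
  haveI := hprob
  refine (Measure.pi_eq ?_).symm
  intro s hs
  rw [Measure.map_apply ((measurable_projV m N).comp (measurable_combineF m n))
    (MeasurableSet.univ_pi hs)]
  classical
  set s₁ : ∀ k, Set (Fin (m k) → ℝ) :=
    fun k => if h : k < N ∧ k < n then s ⟨k, h.1⟩ else univ with hs₁def
  set s₂ : ∀ k, Set (Fin (m k) → ℝ) :=
    fun k => if h : k < N ∧ ¬ k < n then s ⟨k, h.1⟩ else univ with hs₂def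
  have hset : (projV m N ∘ combineF m n) ⁻¹' (univ.pi s) =
      {x | ∀ k < N, x k ∈ s₁ k} ×ˢ {x | ∀ k < N, x k ∈ s₂ k} := by
    ext ⟨p, q⟩
    simp only [mem_preimage, Function.comp_apply, mem_univ_pi, mem_prod, mem_setOf_eq,
      projV, combineF, hs₁def, hs₂def]
    constructor
    · intro hx
      constructor
      · intro k hk
        by_cases hkn : k < n
        · rw [dif_pos ⟨hk, hkn⟩]
          simpa only [if_pos hkn] using hx ⟨k, hk⟩
        · rw [dif_neg (by tauto)]; exact mem_univ _
      · intro k hk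
        by_cases hkn : k < n
        · rw [dif_neg (by tauto)]; exact mem_univ _
        · rw [dif_pos ⟨hk, hkn⟩]
          simpa only [if_neg hkn] using hx ⟨k, hk⟩
    · rintro ⟨h1, h2⟩ i
      by_cases hkn : (i : ℕ) < n
      · have := h1 i i.isLt
        rw [dif_pos ⟨i.isLt, hkn⟩] at this
        simpa only [if_pos hkn, Fin.eta] using this
      · have := h2 i i.isLt
        rw [dif_pos ⟨i.isLt, hkn⟩] at this
        simpa only [if_neg hkn, Fin.eta] using this
  have hm₁ : ∀ k, MeasurableSet (s₁ k) := fun k => by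
    rw [hs₁def]; dsimp only
    by_cases hk : k < N ∧ k < n
    · rw [dif_pos hk]; exact hs _
    · rw [dif_neg hk]; exact MeasurableSet.univ
  have hm₂ : ∀ k, MeasurableSet (s₂ k) := fun k => by
    rw [hs₂def]; dsimp only
    by_cases hk : k < N ∧ ¬ k < n
    · rw [dif_pos hk]; exact hs _
    · rw [dif_neg hk]; exact MeasurableSet.univ
  rw [hset, Measure.prod_prod, hμ N s₁ hm₁, hμ N s₂ hm₂, ← Finset.prod_mul_distrib,
    ← Fin.prod_univ_eq_prod_range (fun k => μs k (s₁ k) * μs k (s₂ k)) N]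
  refine Finset.prod_congr rfl fun i _ => ?_
  by_cases hkn : (i : ℕ) < n
  · have e1 : s₁ (i : ℕ) = s i := by rw [hs₁def]; simp [i.isLt, hkn]
    have e2 : s₂ (i : ℕ) = univ := by rw [hs₂def]; simp [hkn]
    rw [e1, e2, measure_univ, mul_one]
  · have e1 : s₁ (i : ℕ) = univ := by rw [hs₁def]; simp [hkn]
    have e2 : s₂ (i : ℕ) = s i := by rw [hs₂def]; simp [i.isLt, hkn]
    rw [e1, e2, measure_univ, one_mul]

/-- The key factorization: `μ` is the image of `μ × μ` under the combination map. -/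
lemma map_combineF_eq (hprob : ∀ k, IsProbabilityMeasure (μs k))
    (hμ : IsProductMeasure μs μ) [IsProbabilityMeasure μ] (n : ℕ) :
    (μ.prod μ).map (combineF m n) = μ := by
  haveI : IsProbabilityMeasure ((μ.prod μ).map (combineF m n)) :=
    Measure.isProbabilityMeasure_map (measurable_combineF m n).aemeasurable
  set C : Set (Set (∀ k, Fin (m k) → ℝ)) :=
    {s | ∃ N, ∃ A : Set (∀ i : Fin N, Fin (m (i : ℕ)) → ℝ),
      MeasurableSet A ∧ s = projV m N ⁻¹' A} with hC
  have hgen : (inferInstance : MeasurableSpace (∀ k, Fin (m k) → ℝ)) =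
      MeasurableSpace.generateFrom C := by
    refine le_antisymm ?_ ?_
    · rw [pi_sa_def]
      refine iSup_le fun k => ?_
      intro s hs
      rw [MeasurableSpace.measurableSet_comap] at hs
      obtain ⟨B, hB, rfl⟩ := hs
      refine MeasurableSpace.measurableSet_generateFrom ?_
      refine ⟨k + 1, (fun v : ∀ i : Fin (k + 1), Fin (m (i : ℕ)) → ℝ =>
        v ⟨k, k.lt_succ_self⟩) ⁻¹' B, (measurable_pi_apply _) hB, rfl⟩
    · refine MeasurableSpace.generateFrom_le ?_
      rintro s ⟨N, A, hA, rfl⟩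
      exact measurable_projV m N hA
  have hpi : IsPiSystem C := by
    rintro s ⟨N, A, hA, rfl⟩ t ⟨M, B, hB, rfl⟩ -
    refine ⟨max N M,
      ((fun v (i : Fin N) => v (Fin.castLE (le_max_left N M) i)) ⁻¹' A) ∩
      ((fun v (i : Fin M) => v (Fin.castLE (le_max_right N M) i)) ⁻¹' B), ?_, rfl⟩
    exact ((measurable_pi_lambda _ fun i => measurable_pi_apply _) hA).inter
      ((measurable_pi_lambda _ fun i => measurable_pi_apply _) hB)
  refine ext_of_generate_finite C hgen hpi ?_ (by simp)
  rintro s ⟨N, A, hA, rfl⟩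
  rw [Measure.map_apply (measurable_combineF m n) (measurable_projV m N hA)]
  have h1 : combineF m n ⁻¹' (projV m N ⁻¹' A) = (projV m N ∘ combineF m n) ⁻¹' A := rfl
  rw [h1, ← Measure.map_apply ((measurable_projV m N).comp (measurable_combineF m n)) hA,
    map_projV_combineF_eq m hprob hμ n N,
    ← Measure.map_apply (measurable_projV m N) hA, map_projV_eq m hprob hμ N]

end Aux

/-- Theorem 3: if the tail constants `cₙ = ∫ f(0,…,0,y) d(⨂_{k>n}μ_k)(y)` tend to `0`,
then the finite-dimensional (continuous) linear functionals
`gₙ(x) = f(x₁,…,x_{m̃ₙ},0,…)` converge to `f` μ-a.e. -/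
theorem stmt16 (m : ℕ → ℕ) (μs : ∀ k, Measure (Fin (m k) → ℝ))
    (hprob : ∀ k, IsProbabilityMeasure (μs k))
    (μ : Measure (∀ k, Fin (m k) → ℝ)) [IsProbabilityMeasure μ]
    (hμ : IsProductMeasure μs μ)
    (f : (∀ k, Fin (m k) → ℝ) → ℝ)
    (hadd : ∀ x y, f (x + y) = f x + f y)
    (hsmul : ∀ (c : ℝ) (x), f (c • x) = c * f x)
    (hf : Integrable f μ)
    (hc : Tendsto (fun n => ∫ y, f (fun k => if k < n then 0 else y k) ∂μ)
      atTop (𝓝 0)) :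
    ∀ᵐ x ∂μ, Tendsto (fun n => f (fun k => if k < n then x k else 0))
      atTop (𝓝 (f x)) := by
  classical
  -- truncation and tail maps
  set g : ℕ → (∀ k, Fin (m k) → ℝ) → ℝ := fun n x => f (fun k => if k < n then x k else 0) with hg
  set h : ℕ → (∀ k, Fin (m k) → ℝ) → ℝ := fun n x => f (fun k => if k < n then 0 else x k) with hh
  set c : ℕ → ℝ := fun n => ∫ y, h n y ∂μ with hcdef
  -- splitting of f
  have hsplit : ∀ n (x : ∀ k, Fin (m k) → ℝ), f x = g n x + h n x := by
    intro n x
    rw [hg, hh]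
    dsimp only
    rw [← hadd]
    congr 1
    funext k
    by_cases hk : k < n <;> simp [hk]
  have hcombine_split : ∀ n (pq : (∀ k, Fin (m k) → ℝ) × (∀ k, Fin (m k) → ℝ)),
      f (combineF m n pq) = g n pq.1 + h n pq.2 := by
    intro n pq
    rw [hg, hh]
    dsimp only
    rw [← hadd]
    congr 1
    funext k
    by_cases hk : k < n <;> simp [combineF, hk]
  have hν : ∀ n, (μ.prod μ).map (combineF m n) = μ :=
    fun n => map_combineF_eq m hprob hμ n
  -- integrability of f ∘ combineF
  have hF_int : ∀ n, Integrable (fun pq => f (combineF m n pq)) (μ.prod μ) := by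
    intro n
    have hfi : Integrable f ((μ.prod μ).map (combineF m n)) := by rw [hν n]; exact hf
    exact (integrable_map_measure (by rw [hν n]; exact hf.1)
      (measurable_combineF m n).aemeasurable).mp hfi
  -- integrability of h n
  have hh_int : ∀ n, Integrable (h n) μ := by
    intro n
    have hae : ∀ᵐ p ∂μ, Integrable (fun q => f (combineF m n (p, q))) μ :=
      (hF_int n).prod_right_ae
    have hne : (ae μ).NeBot := ae_neBot.mpr (IsProbabilityMeasure.ne_zero μ)
    obtain ⟨p, hp⟩ := hae.exists
    have : Integrable (fun q => g n p + h n q) μ := by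
      refine hp.congr (ae_of_all _ fun q => ?_)
      exact hcombine_split n (p, q)
    have := this.sub (integrable_const (g n p))
    refine this.congr (ae_of_all _ fun q => ?_)
    simp
  -- integrability of g n
  have hg_int : ∀ n, Integrable (g n) μ := by
    intro n
    refine (hf.sub (hh_int n)).congr (ae_of_all _ fun x => ?_)
    show f x - h n x = g n x
    rw [hsplit n x]; ring
  -- inner Fubini integral
  have hinner : ∀ n (p : ∀ k, Fin (m k) → ℝ), ∫ q, f (combineF m n (p, q)) ∂μ = g n p + c n := by
    intro n p
    have : (fun q => f (combineF m n (p, q))) = fun q => g n p + h n q := by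
      funext q; exact hcombine_split n (p, q)
    rw [this, integral_add (integrable_const _) (hh_int n), integral_const]
    simp [hcdef]
  -- measurable representative of f
  obtain ⟨f', hf'meas, hff'⟩ := hf.1
  have hf'_int : Integrable f' μ := hf.congr hff'
  -- the conditional expectation identity
  have hcond : ∀ n, (fun x => g n x + c n) =ᵐ[μ] μ[f | coordSA m n] := by
    intro n
    haveI : SigmaFinite (μ.trim (coordSA_le m n)) := by infer_instance
    refine ae_eq_condExp_of_forall_setIntegral_eq (coordSA_le m n) hf ?_ ?_ ?_
    · intro s _ _
      exact ((hg_int n).add (integrable_const _)).integrableOn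
    · -- set integrals agree
      intro s hs _
      obtain ⟨A, hA, rfl⟩ := hs
      show (∫ x in projV m n ⁻¹' A, (g n x + c n) ∂μ) = ∫ x in projV m n ⁻¹' A, f x ∂μ
      have hs0 : MeasurableSet (projV m n ⁻¹' A) := measurable_projV m n hA
      set s' : Set (∀ k, Fin (m k) → ℝ) := projV m n ⁻¹' A with hs'
      have hpre : combineF m n ⁻¹' s' = s' ×ˢ univ := by
        ext ⟨p, q⟩
        simp only [mem_preimage, mem_prod, mem_univ, and_true, hs']
        have : projV m n (combineF m n (p, q)) = projV m n p := by
          funext i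
          simp [projV, combineF, i.isLt]
        rw [this]
      have hres : (μ.restrict s').prod μ = (μ.prod μ).restrict (s' ×ˢ univ) := by
        have := Measure.prod_restrict (μ := μ) (ν := μ) s' univ
        rwa [Measure.restrict_univ] at this
      have hmap : μ.restrict s' =
          ((μ.prod μ).restrict (s' ×ˢ univ)).map (combineF m n) := by
        conv_lhs => rw [← hν n]
        rw [Measure.restrict_map (measurable_combineF m n) hs0, hpre]
      have hFr : Integrable (fun pq => f (combineF m n pq)) ((μ.restrict s').prod μ) := by
        rw [hres]; exact (hF_int n).restrict
      calc ∫ x in s', (g n x + c n) ∂μ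
      _ = ∫ p, (g n p + c n) ∂(μ.restrict s') := rfl
      _ = ∫ p, ∫ q, f (combineF m n (p, q)) ∂μ ∂(μ.restrict s') := by
          exact integral_congr_ae (ae_of_all _ fun p => (hinner n p).symm)
      _ = ∫ pq, f (combineF m n pq) ∂((μ.restrict s').prod μ) := (integral_prod _ hFr).symm
      _ = ∫ x, f x ∂(((μ.prod μ).restrict (s' ×ˢ univ)).map (combineF m n)) := by
          have hsm : AEStronglyMeasurable f
              (((μ.prod μ).restrict (s' ×ˢ univ)).map (combineF m n)) := by
            rw [← hmap]; exact hf.1.restrict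
          rw [integral_map (measurable_combineF m n).aemeasurable hsm, hres]
      _ = ∫ x in s', f x ∂μ := by rw [← hmap]
    · -- a.e. strong measurability with respect to coordSA m n
      set ext0 : (∀ i : Fin n, Fin (m (i : ℕ)) → ℝ) → (∀ k, Fin (m k) → ℝ) :=
        fun v k => if hk : k < n then v ⟨k, hk⟩ else 0 with hext
      have hext_meas : Measurable ext0 := by
        refine measurable_pi_lambda _ fun k => ?_
        by_cases hk : k < n
        · simp only [hext, dif_pos hk]
          exact measurable_pi_apply _
        · simp only [hext, dif_neg hk]
          exact measurable_const
      set G0 : (∀ i : Fin n, Fin (m (i : ℕ)) → ℝ) → ℝ :=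
        fun v => ∫ q, f' (combineF m n (ext0 v, q)) ∂μ with hG0
      have hG0_meas : StronglyMeasurable G0 := by
        refine StronglyMeasurable.integral_prod_right' (f := fun vq =>
          f' (combineF m n (ext0 vq.1, vq.2))) ?_
        exact hf'meas.comp_measurable ((measurable_combineF m n).comp
          ((hext_meas.comp measurable_fst).prodMk measurable_snd))
      set G : (∀ k, Fin (m k) → ℝ) → ℝ := fun x => ∫ q, f' (combineF m n (x, q)) ∂μ with hG
      have hGG0 : G = G0 ∘ projV m n := by
        funext x
        simp only [hG, hG0, Function.comp_apply]
        congr 1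
        funext q
        congr 1
        funext k
        by_cases hk : k < n <;> simp [combineF, hext, projV, hk]
      have hG_meas : StronglyMeasurable[coordSA m n] G := by
        rw [hGG0, coordSA_eq]
        exact hG0_meas.comp_measurable (measurable_iff_comap_le.mpr le_rfl)
      -- G agrees a.e. with g n + c n
      have hae2 : ∀ᵐ pq ∂(μ.prod μ), f (combineF m n pq) = f' (combineF m n pq) := by
        have := Measure.tendsto_ae_map (μ := μ.prod μ) (measurable_combineF m n).aemeasurable
        rw [hν n] at this
        exact this.eventually hff'
      have hae3 : ∀ᵐ p ∂μ, ∀ᵐ q ∂μ, f (combineF m n (p, q)) = f' (combineF m n (p, q)) :=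
        Measure.ae_ae_of_ae_prod hae2
      have hGeq : (fun x => g n x + c n) =ᵐ[μ] G := by
        filter_upwards [hae3] with p hp
        rw [hG]
        dsimp only
        rw [← hinner n p]
        exact integral_congr_ae hp
      exact ⟨G, hG_meas, hGeq⟩
  -- the filtration
  set ℱ : Filtration ℕ (inferInstance : MeasurableSpace (∀ k, Fin (m k) → ℝ)) :=
    ⟨coordSA m, coordSA_mono m, coordSA_le m⟩ with hℱ
  have hℱn : ∀ n, ℱ n = coordSA m n := fun n => rfl
  -- Lévy's upward theorem for f'
  have hf'_sm : StronglyMeasurable[⨆ n, ℱ n] f' := by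
    have : (⨆ n, ℱ n) = (inferInstance : MeasurableSpace (∀ k, Fin (m k) → ℝ)) := iSup_coordSA m
    rw [this]
    exact hf'meas
  have hlevy : ∀ᵐ x ∂μ, Tendsto (fun n => (μ[f' | ℱ n]) x) atTop (𝓝 (f' x)) :=
    hf'_int.tendsto_ae_condExp hf'_sm
  -- conditional expectations agree
  have hce : ∀ n, μ[f | ℱ n] =ᵐ[μ] μ[f' | ℱ n] := fun n => condExp_congr_ae hff'
  -- put everything together
  have hall : ∀ᵐ x ∂μ, (∀ n, g n x + c n = (μ[f | ℱ n]) x) ∧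
      (∀ n, (μ[f | ℱ n]) x = (μ[f' | ℱ n]) x) ∧
      Tendsto (fun n => (μ[f' | ℱ n]) x) atTop (𝓝 (f' x)) ∧ f x = f' x := by
    refine ((ae_all_iff.mpr hcond).and ((ae_all_iff.mpr hce).and (hlevy.and hff'))).mono ?_
    tauto
  filter_upwards [hall] with x hx
  obtain ⟨h1, h2, h3, h4⟩ := hx
  have htend : Tendsto (fun n => g n x + c n) atTop (𝓝 (f x)) := by
    have : (fun n => g n x + c n) = fun n => (μ[f' | ℱ n]) x := by
      funext n; rw [h1 n, h2 n]
    rw [this, h4]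
    exact h3
  have : Tendsto (fun n => (g n x + c n) - c n) atTop (𝓝 (f x - 0)) := htend.sub hc
  simpa using this
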